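/- Let t₁,...,t_K ∈ C[−T,T], A ∈ ℝ, and let a_j denote the pointwise j-th largest of the t_i. Among all continuous v on [−T,T] with ∫_{−T}^T v = A, the functional I[v] = ∫_{−T}^T Σ_{i=1}^K |t_i(x) − v(x)| dx attains its infimum, and every minimizer v satisfies a_{j+1}(x) ≤ v(x) ≤ a_j(x) for all x, where j is chosen so that ∫_{−T}^T a_{j+1} ≤ A ≤ ∫_{−T}^T a_j (with a₀=+∞, a_{K+1}=−∞). -/

import Mathlib

open Finset

section Aux
open scoped Classical

/-- per-point shift bound -/
lemma aux_shift {K : ℕ} (u : Fin K → ℝ) (c y : ℝ) (hcy : c ≤ y) (m : ℕ)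
    (hm : m ≤ (Finset.univ.filter (fun i => u i ≤ c)).card) :
    (∑ i, |u i - c|) + (2 * (m : ℝ) - K) * (y - c) ≤ ∑ i, |u i - y| := by
  have key : ∀ i : Fin K, |u i - c| + (if u i ≤ c then (y - c) else -(y - c)) ≤ |u i - y| := by
    intro i
    by_cases h : u i ≤ c
    · rw [if_pos h, abs_of_nonpos (by linarith), abs_of_nonpos (by linarith)]
      ring_nf; linarith
    · rw [if_neg h]
      push_neg at h
      have h1 : |u i - c| ≤ |u i - y| + |y - c| := abs_sub_le _ _ _
      have h2 : |y - c| = y - c := abs_of_nonneg (by linarith)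
      linarith
  have hsum : (∑ i, (|u i - c| + (if u i ≤ c then (y - c) else -(y - c)))) ≤ ∑ i, |u i - y| :=
    Finset.sum_le_sum (fun i _ => key i)
  rw [Finset.sum_add_distrib] at hsum
  set n := (Finset.univ.filter (fun i => u i ≤ c)).card with hn
  have hite : (∑ i, (if u i ≤ c then (y - c) else -(y - c)))
      = (n : ℝ) * (y - c) + ((K - n : ℕ) : ℝ) * (-(y - c)) := by
    rw [Finset.sum_ite, Finset.sum_const, Finset.sum_const]
    have hcard2 : (Finset.univ.filter (fun i : Fin K => ¬ u i ≤ c)).card = K - n := by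
      have := Finset.card_filter_add_card_filter_not (s := (Finset.univ : Finset (Fin K)))
        (p := fun i => u i ≤ c)
      simp only [Finset.card_univ, Fintype.card_fin] at this
      omega
    rw [hcard2]
    simp [nsmul_eq_mul]
    left; convert hn.symm
  rw [hite] at hsum
  have hnK : n ≤ K := by
    have := Finset.card_filter_le (Finset.univ : Finset (Fin K)) (fun i => u i ≤ c)
    simpa using this
  have hcast : ((K - n : ℕ) : ℝ) = (K : ℝ) - n := by
    exact Nat.cast_sub hnK
  have hmn : (m : ℝ) ≤ n := by exact_mod_cast hm
  nlinarith [hsum]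

/-- constancy of the h-functional on the strip -/
lemma aux_const {K : ℕ} (u : Fin K → ℝ) (p q s s' : ℝ) (hps : p ≤ s) (hsq : s ≤ q)
    (hps' : p ≤ s') (hs'q : s' ≤ q)
    (hcov : ∀ i, u i ≤ p ∨ q ≤ u i) (m : ℕ)
    (hm : (Finset.univ.filter (fun i => u i ≤ p)).card = m) :
    (∑ i, |u i - s|) + ((K : ℝ) - 2 * m) * s = (∑ i, |u i - s'|) + ((K : ℝ) - 2 * m) * s' := by
  have H : ∀ r : ℝ, p ≤ r → r ≤ q →
      (∑ i, |u i - r|) + ((K : ℝ) - 2 * m) * r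
        = (∑ i ∈ Finset.univ.filter (fun i => ¬ u i ≤ p), u i)
          - ∑ i ∈ Finset.univ.filter (fun i => u i ≤ p), u i := by
    intro r hpr hrq
    have hterm : ∀ i : Fin K, |u i - r| = if u i ≤ p then r - u i else u i - r := by
      intro i
      by_cases h : u i ≤ p
      · rw [if_pos h, abs_of_nonpos (by linarith)]; ring
      · rw [if_neg h]
        rcases hcov i with h' | h'
        · exact absurd h' h
        · rw [abs_of_nonneg (by linarith)]
    simp only [hterm]
    rw [Finset.sum_ite, Finset.sum_sub_distrib, Finset.sum_sub_distrib,
      Finset.sum_const, Finset.sum_const, hm]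
    have hcard2 : (Finset.univ.filter (fun i : Fin K => ¬ u i ≤ p)).card = K - m := by
      have := Finset.card_filter_add_card_filter_not (s := (Finset.univ : Finset (Fin K)))
        (p := fun i => u i ≤ p)
      simp only [Finset.card_univ, Fintype.card_fin] at this
      omega
    have hmK : m ≤ K := by
      rw [← hm]
      have := Finset.card_filter_le (Finset.univ : Finset (Fin K)) (fun i => u i ≤ p)
      simpa using this
    rw [hcard2]
    have : ((K - m : ℕ) : ℝ) = (K : ℝ) - m := by exact Nat.cast_sub hmK
    simp [nsmul_eq_mul, this]
    ring
  rw [H s hps hsq, H s' hps' hs'q]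

/-- transfer of counts through the rearrangement -/
lemma aux_count {K : ℕ} (u : Fin K → ℝ) (α : ℕ → ℝ)
    (h : Multiset.map (fun j => α j) (Finset.Icc 1 K).val
        = Multiset.map (fun i : Fin K => u i) Finset.univ.val)
    (p : ℝ → Prop) [DecidablePred p] :
    (Finset.univ.filter (fun i => p (u i))).card
      = ((Finset.Icc 1 K).filter (fun k => p (α k))).card := by
  have := congrArg (Multiset.countP p) h
  rw [Multiset.countP_map, Multiset.countP_map] at this
  simpa [Finset.card, Finset.filter_val] using this.symm

end Aux

theorem stmt_12 (T : ℝ) (hT : 0 < T) (K : ℕ) (t : Fin K → ℝ → ℝ)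
    (ht : ∀ i, ContinuousOn (t i) (Set.Icc (-T) T))
    (a : ℕ → ℝ → ℝ)
    (hrearr : ∀ x ∈ Set.Icc (-T) T,
      Multiset.map (fun j => a j x) (Finset.Icc 1 K).val
        = Multiset.map (fun i : Fin K => t i x) Finset.univ.val)
    (hmono : ∀ j, 1 ≤ j → j < K → ∀ x ∈ Set.Icc (-T) T, a (j + 1) x ≤ a j x)
    (A : ℝ) (j : ℕ) (hjK : j ≤ K)
    (hA1 : ∀ _ : j < K, (∫ x in (-T)..T, a (j + 1) x) ≤ A)
    (hA2 : ∀ _ : 1 ≤ j, A ≤ ∫ x in (-T)..T, a j x) :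
    (∃ v : ℝ → ℝ, ContinuousOn v (Set.Icc (-T) T) ∧ (∫ x in (-T)..T, v x) = A ∧
      ∀ w : ℝ → ℝ, ContinuousOn w (Set.Icc (-T) T) → (∫ x in (-T)..T, w x) = A →
        (∫ x in (-T)..T, ∑ i, |t i x - v x|) ≤ ∫ x in (-T)..T, ∑ i, |t i x - w x|) ∧
    (∀ v : ℝ → ℝ, ContinuousOn v (Set.Icc (-T) T) → (∫ x in (-T)..T, v x) = A →
      (∀ w : ℝ → ℝ, ContinuousOn w (Set.Icc (-T) T) → (∫ x in (-T)..T, w x) = A →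
        (∫ x in (-T)..T, ∑ i, |t i x - v x|) ≤ ∫ x in (-T)..T, ∑ i, |t i x - w x|) →
      ∀ x ∈ Set.Icc (-T) T,
        (∀ _ : j < K, a (j + 1) x ≤ v x) ∧ (∀ _ : 1 ≤ j, v x ≤ a j x)) := by
  classical
  have hTT : (-T) ≤ T := by linarith
  have huIcc : Set.uIcc (-T) T = Set.Icc (-T) T := Set.uIcc_of_le hTT
  have hInt : ∀ f : ℝ → ℝ, ContinuousOn f (Set.Icc (-T) T) →
      IntervalIntegrable f MeasureTheory.volume (-T) T := by
    intro f hf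
    exact ContinuousOn.intervalIntegrable (by rwa [huIcc])
  -- antitone chain
  have hanti : ∀ x ∈ Set.Icc (-T) T, ∀ l k, 1 ≤ l → l ≤ k → k ≤ K → a k x ≤ a l x := by
    intro x hx l k h1 hlk hkK
    induction k, hlk using Nat.le_induction with
    | base => exact le_rfl
    | succ n hn ih =>
        exact le_trans (hmono n (h1.trans hn) (by omega) x hx) (ih (by omega))
  -- count transfer
  have hcnt : ∀ x ∈ Set.Icc (-T) T, ∀ p : ℝ → Prop,
      (Finset.univ.filter (fun i => p (t i x))).card
        = ((Finset.Icc 1 K).filter (fun k => p (a k x))).card := by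
    intro x hx p
    exact aux_count _ _ (hrearr x hx) p
  -- counting facts
  have hcard_le : ∀ x ∈ Set.Icc (-T) T, ∀ r, 1 ≤ r → r ≤ K →
      K + 1 - r ≤ (Finset.univ.filter (fun i => t i x ≤ a r x)).card := by
    intro x hx r h1 hrK
    rw [hcnt x hx (fun z => z ≤ a r x)]
    have hsub : Finset.Icc r K ⊆ (Finset.Icc 1 K).filter (fun k => a k x ≤ a r x) := by
      intro k hk
      rw [Finset.mem_Icc] at hk
      rw [Finset.mem_filter, Finset.mem_Icc]
      exact ⟨⟨h1.trans hk.1, hk.2⟩, hanti x hx r k h1 hk.1 hk.2⟩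
    have h2 := Finset.card_le_card hsub
    rw [Nat.card_Icc] at h2
    omega
  have hcard_ge : ∀ x ∈ Set.Icc (-T) T, ∀ r, 1 ≤ r → r ≤ K →
      r ≤ (Finset.univ.filter (fun i => a r x ≤ t i x)).card := by
    intro x hx r h1 hrK
    rw [hcnt x hx (fun z => a r x ≤ z)]
    have hsub : Finset.Icc 1 r ⊆ (Finset.Icc 1 K).filter (fun k => a r x ≤ a k x) := by
      intro k hk
      rw [Finset.mem_Icc] at hk
      rw [Finset.mem_filter, Finset.mem_Icc]
      exact ⟨⟨hk.1, hk.2.trans hrK⟩, hanti x hx k r hk.1 hk.2 hrK⟩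
    have h2 := Finset.card_le_card hsub
    rw [Nat.card_Icc] at h2
    omega
  have hcard_lt : ∀ x ∈ Set.Icc (-T) T, ∀ r, 1 ≤ r → r ≤ K →
      (Finset.univ.filter (fun i => t i x < a r x)).card ≤ K - r := by
    intro x hx r h1 hrK
    rw [hcnt x hx (fun z => z < a r x)]
    have hsub : (Finset.Icc 1 K).filter (fun k => a k x < a r x) ⊆ Finset.Icc (r+1) K := by
      intro k hk
      rw [Finset.mem_filter, Finset.mem_Icc] at hk
      rw [Finset.mem_Icc]
      refine ⟨?_, hk.1.2⟩
      by_contra hcon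
      push_neg at hcon
      have := hanti x hx k r hk.1.1 (by omega) hrK
      linarith [hk.2]
    have h2 := Finset.card_le_card hsub
    rw [Nat.card_Icc] at h2
    omega
  set c0 : ℝ := 2 * (j : ℝ) - K with hc0
  set hf : ℝ → ℝ → ℝ := fun x y => (∑ i, |t i x - y|) + c0 * y with hhf
  set strip : ℝ → ℝ → Prop :=
    fun x s => (j < K → a (j + 1) x ≤ s) ∧ (1 ≤ j → s ≤ a j x) with hstripdef
  have hstrip_aj : ∀ x ∈ Set.Icc (-T) T, 1 ≤ j → strip x (a j x) := by
    intro x hx hj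
    exact ⟨fun hjK' => hmono j hj hjK' x hx, fun _ => le_rfl⟩
  have hstrip_aj1 : ∀ x ∈ Set.Icc (-T) T, j < K → strip x (a (j + 1) x) := by
    intro x hx hjK'
    exact ⟨fun _ => le_rfl, fun hj => hmono j hj hjK' x hx⟩
  -- constancy of hf on strip
  have hconst : ∀ x ∈ Set.Icc (-T) T, ∀ s s', strip x s → strip x s' → hf x s = hf x s' := by
    intro x hx s s' hs hs'
    rcases Nat.eq_zero_or_pos K with hK0 | hK1
    · have hj0 : j = 0 := by omega
      have hu : (Finset.univ : Finset (Fin K)) = ∅ := by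
        rw [Finset.univ_eq_empty_iff]
        rw [hK0]
        exact Fin.isEmpty
      simp [hhf, hc0, hu, hj0, hK0]
    · by_cases hj0 : j = 0
      · -- all t's below a 1
        have hjK1 : j < K := by omega
        have hall : ∀ i, t i x ≤ a 1 x := by
          have hcard := hcard_le x hx 1 le_rfl hK1
          have huniv : (Finset.univ.filter (fun i => t i x ≤ a 1 x)) = Finset.univ := by
            apply Finset.eq_univ_of_card
            have h2 := Finset.card_filter_le (Finset.univ : Finset (Fin K)) (fun i => t i x ≤ a 1 x)
            simp only [Finset.card_univ, Fintype.card_fin] at h2 ⊢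
            omega
          intro i
          have hmem : i ∈ Finset.univ.filter (fun i => t i x ≤ a 1 x) := by
            rw [huniv]; exact Finset.mem_univ i
          exact (Finset.mem_filter.mp hmem).2
        have hm : (Finset.univ.filter (fun i => t i x ≤ a 1 x)).card = K := by
          apply le_antisymm
          · have h2 := Finset.card_filter_le (Finset.univ : Finset (Fin K)) (fun i => t i x ≤ a 1 x)
            simpa using h2
          · have := hcard_le x hx 1 le_rfl hK1
            omega
        have hps : a 1 x ≤ s := by
          have := hs.1 hjK1
          rwa [hj0, zero_add] at this
        have hps' : a 1 x ≤ s' := by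
          have := hs'.1 hjK1
          rwa [hj0, zero_add] at this
        have hres := aux_const (fun i => t i x) (a 1 x) (max s s') s s' hps
          (le_max_left s s') hps' (le_max_right s s') (fun i => Or.inl (hall i)) K hm
        have hcoef : ((K : ℝ) - 2 * K) = c0 := by
          rw [hc0, hj0]
          push_cast
          ring
        rw [hhf]
        simp only
        rw [← hcoef]
        exact hres
      · by_cases hjeqK : j = K
        · -- all t's above a K
          have hall : ∀ i, a K x ≤ t i x := by
            have hcard := hcard_ge x hx K hK1 le_rfl
            have huniv : (Finset.univ.filter (fun i => a K x ≤ t i x)) = Finset.univ := by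
              apply Finset.eq_univ_of_card
              have h2 := Finset.card_filter_le (Finset.univ : Finset (Fin K)) (fun i => a K x ≤ t i x)
              simp only [Finset.card_univ, Fintype.card_fin] at h2 ⊢
              omega
            intro i
            have hmem : i ∈ Finset.univ.filter (fun i => a K x ≤ t i x) := by
              rw [huniv]; exact Finset.mem_univ i
            exact (Finset.mem_filter.mp hmem).2
          have hsq : s ≤ a K x := by
            have := hs.2 (by omega)
            rwa [hjeqK] at this
          have hs'q : s' ≤ a K x := by
            have := hs'.2 (by omega)
            rwa [hjeqK] at this
          have hm : (Finset.univ.filter (fun i => t i x ≤ min s s' - 1)).card = 0 := by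
            rw [Finset.card_eq_zero, Finset.filter_eq_empty_iff]
            intro i _
            have h1 := hall i
            have h2 : min s s' ≤ s := min_le_left s s'
            push_neg
            linarith
          have hres := aux_const (fun i => t i x) (min s s' - 1) (a K x) s s'
            (by linarith [min_le_left s s']) hsq (by linarith [min_le_right s s']) hs'q
            (fun i => Or.inr (hall i)) 0 hm
          have hcoef : ((K : ℝ) - 2 * (0:ℕ)) = c0 := by
            rw [hc0, hjeqK]
            push_cast
            ring
          rw [hhf]
          simp only
          rw [← hcoef]
          exact hres
        · -- middle case
          have hj1 : 1 ≤ j := by omega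
          have hjlt : j < K := by omega
          have hs1 := hs.1 hjlt
          have hs2 := hs.2 hj1
          have hs'1 := hs'.1 hjlt
          have hs'2 := hs'.2 hj1
          by_cases heq : a (j+1) x = a j x
          · have : s = s' := by
              have h1 : s = a j x := le_antisymm hs2 (heq ▸ hs1)
              have h2 : s' = a j x := le_antisymm hs'2 (heq ▸ hs'1)
              rw [h1, h2]
            rw [this]
          · have hlt : a (j+1) x < a j x :=
              lt_of_le_of_ne (hmono j hj1 hjlt x hx) heq
            have hP := hcard_le x hx (j+1) (by omega) (by omega)
            have hQ := hcard_ge x hx j hj1 hjK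
            set P := Finset.univ.filter (fun i => t i x ≤ a (j+1) x) with hPdef
            set Q := Finset.univ.filter (fun i => a j x ≤ t i x) with hQdef
            have hdisj : Disjoint P Q := by
              rw [Finset.disjoint_left]
              intro i hiP hiQ
              rw [hPdef, Finset.mem_filter] at hiP
              rw [hQdef, Finset.mem_filter] at hiQ
              linarith [hiP.2, hiQ.2]
            have hcardPQ : P.card + Q.card ≤ K := by
              have h1 : (P ∪ Q).card = P.card + Q.card := Finset.card_union_of_disjoint hdisj
              have h2 : (P ∪ Q).card ≤ K := by
                have := Finset.card_le_univ (P ∪ Q)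
                simpa using this
              omega
            have hPcard : P.card = K - j := by omega
            have hcover : ∀ i, t i x ≤ a (j+1) x ∨ a j x ≤ t i x := by
              have huniv : P ∪ Q = Finset.univ := by
                apply Finset.eq_univ_of_card
                rw [Finset.card_union_of_disjoint hdisj]
                simp only [Finset.card_univ, Fintype.card_fin]
                omega
              intro i
              have hmem : i ∈ P ∪ Q := by rw [huniv]; exact Finset.mem_univ i
              rcases Finset.mem_union.mp hmem with h | h
              · rw [hPdef, Finset.mem_filter] at h
                exact Or.inl h.2
              · rw [hQdef, Finset.mem_filter] at h
                exact Or.inr h.2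
            have hres := aux_const (fun i => t i x) (a (j+1) x) (a j x) s s'
              hs1 hs2 hs'1 hs'2 hcover (K - j) hPcard
            have hcoef : ((K : ℝ) - 2 * ((K - j : ℕ) : ℝ)) = c0 := by
              rw [hc0, Nat.cast_sub hjK]
              ring
            rw [hhf]
            simp only
            rw [← hcoef]
            exact hres
  -- quantitative bounds
  have hup : ∀ x ∈ Set.Icc (-T) T, 1 ≤ j → ∀ y, a j x ≤ y →
      hf x (a j x) + 2 * (y - a j x) ≤ hf x y := by
    intro x hx hj y hy
    have hcard := hcard_le x hx j hj hjK
    have hshift := aux_shift (fun i => t i x) (a j x) y hy (K + 1 - j) hcard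
    have hm' : 2 * (((K + 1 - j : ℕ)) : ℝ) - K = 2 - c0 := by
      rw [hc0, Nat.cast_sub (by omega : j ≤ K + 1)]
      push_cast
      ring
    rw [hm'] at hshift
    have hexp : (2 - c0) * (y - a j x) = 2 * (y - a j x) - c0 * y + c0 * (a j x) := by ring
    rw [hhf]
    simp only
    linarith [hshift, hexp]
  have hdn : ∀ x ∈ Set.Icc (-T) T, j < K → ∀ y, y ≤ a (j + 1) x →
      hf x (a (j + 1) x) + 2 * (a (j + 1) x - y) ≤ hf x y := by
    intro x hx hjK' y hy
    have hcard := hcard_ge x hx (j+1) (by omega) (by omega)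
    have hcard' : j + 1 ≤ (Finset.univ.filter (fun i => -(t i x) ≤ -(a (j+1) x))).card := by
      have hfe : (Finset.univ.filter (fun i : Fin K => -(t i x) ≤ -(a (j+1) x)))
          = Finset.univ.filter (fun i => a (j+1) x ≤ t i x) := by
        apply Finset.filter_congr
        intro i _
        simp
      rw [hfe]
      exact hcard
    have hshift := aux_shift (fun i => -(t i x)) (-(a (j+1) x)) (-y)
      (by linarith) (j+1) hcard'
    have habs1 : ∀ z : ℝ, (∑ i, |(-(t i x)) - (-z)|) = ∑ i, |t i x - z| := by
      intro z
      apply Finset.sum_congr rfl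
      intro i _
      rw [show (-(t i x)) - (-z) = -(t i x - z) by ring, abs_neg]
    rw [habs1, habs1] at hshift
    have hm' : 2 * (((j + 1 : ℕ)) : ℝ) - K = c0 + 2 := by
      rw [hc0]
      push_cast
      ring
    rw [hm'] at hshift
    have hexp : (c0 + 2) * (-y - -(a (j+1) x)) =
        c0 * (a (j+1) x) - c0 * y + 2 * (a (j+1) x - y) := by ring
    rw [hhf]
    simp only
    linarith [hshift, hexp]
  have hM1 : ∀ x ∈ Set.Icc (-T) T, ∀ s, strip x s → ∀ y, hf x s ≤ hf x y := by
    intro x hx s hs y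
    by_cases hy1 : 1 ≤ j → y ≤ a j x
    · by_cases hy2 : j < K → a (j + 1) x ≤ y
      · exact le_of_eq (hconst x hx s y hs ⟨hy2, hy1⟩)
      · push_neg at hy2
        obtain ⟨hjK', hy⟩ := hy2
        calc hf x s = hf x (a (j+1) x) := hconst x hx s _ hs (hstrip_aj1 x hx hjK')
          _ ≤ hf x y := by
              have := hdn x hx hjK' y hy.le
              nlinarith [hy]
    · push_neg at hy1
      obtain ⟨hj, hy⟩ := hy1
      calc hf x s = hf x (a j x) := hconst x hx s _ hs (hstrip_aj x hx hj)
        _ ≤ hf x y := by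
            have := hup x hx hj y hy.le
            nlinarith [hy]
  have hM2 : ∀ x ∈ Set.Icc (-T) T, ∀ s, strip x s → 1 ≤ j → ∀ y,
      hf x s + 2 * (y - a j x) ≤ hf x y := by
    intro x hx s hs hj y
    by_cases hy : y ≤ a j x
    · have := hM1 x hx s hs y
      nlinarith
    · push_neg at hy
      have h1 := hup x hx hj y hy.le
      have h2 := hconst x hx s (a j x) hs (hstrip_aj x hx hj)
      linarith
  have hM3 : ∀ x ∈ Set.Icc (-T) T, ∀ s, strip x s → j < K → ∀ y,
      hf x s + 2 * (a (j + 1) x - y) ≤ hf x y := by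
    intro x hx s hs hjK' y
    by_cases hy : a (j+1) x ≤ y
    · have := hM1 x hx s hs y
      nlinarith
    · push_neg at hy
      have h1 := hdn x hx hjK' y hy.le
      have h2 := hconst x hx s (a (j+1) x) hs (hstrip_aj1 x hx hjK')
      linarith
  -- continuous versions of the order curves
  have hb : ∀ r, 1 ≤ r → r ≤ K → ∃ b : ℝ → ℝ, ContinuousOn b (Set.Icc (-T) T) ∧
      ∀ x ∈ Set.Icc (-T) T, a r x = b x := by
    intro r h1 hrK
    have hne : (Finset.univ.powersetCard (K + 1 - r) : Finset (Finset (Fin K))).Nonempty := by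
      apply Finset.powersetCard_nonempty.mpr
      simp only [Finset.card_univ, Fintype.card_fin]
      omega
    set F : Finset (Fin K) → ℝ → ℝ :=
      fun S x => if hS : S.Nonempty then S.sup' hS (fun i => t i x) else 0 with hF
    have hFne : ∀ (S : Finset (Fin K)) (hS : S.Nonempty), F S = fun x => S.sup' hS (fun i => t i x) := by
      intro S hS
      funext x
      rw [hF]
      simp only
      rw [dif_pos hS]
    refine ⟨fun x => (Finset.univ.powersetCard (K + 1 - r)).inf' hne (fun S => F S x), ?_, ?_⟩
    · apply ContinuousOn.finset_inf'_apply hne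
      intro S hS
      rw [Finset.mem_powersetCard] at hS
      have hSne : S.Nonempty := Finset.card_pos.mp (by rw [hS.2]; omega)
      rw [hFne S hSne]
      exact ContinuousOn.finset_sup'_apply hSne (fun i _ => ht i)
    · intro x hx
      apply le_antisymm
      · -- a r x ≤ inf'
        apply Finset.le_inf'
        intro S hS
        rw [Finset.mem_powersetCard] at hS
        have hSne : S.Nonempty := Finset.card_pos.mp (by rw [hS.2]; omega)
        rw [hFne S hSne]
        by_contra hcon
        push_neg at hcon
        have hsub : S ⊆ Finset.univ.filter (fun i => t i x < a r x) := by
          intro i hi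
          simp only [Finset.mem_filter, Finset.mem_univ, true_and]
          exact lt_of_le_of_lt (Finset.le_sup' (fun i => t i x) hi) hcon
        have hc1 := Finset.card_le_card hsub
        have hc2 := hcard_lt x hx r h1 hrK
        rw [hS.2] at hc1
        omega
      · -- inf' ≤ a r x
        have hcard := hcard_le x hx r h1 hrK
        obtain ⟨S₀, hS₀sub, hS₀card⟩ := Finset.exists_subset_card_eq hcard
        have hS₀mem : S₀ ∈ Finset.univ.powersetCard (K + 1 - r) := by
          rw [Finset.mem_powersetCard]
          exact ⟨Finset.subset_univ _, hS₀card⟩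
        refine le_trans (Finset.inf'_le _ hS₀mem) ?_
        have hS₀ne : S₀.Nonempty := Finset.card_pos.mp (by rw [hS₀card]; omega)
        rw [hFne S₀ hS₀ne]
        apply Finset.sup'_le
        intro i hi
        have hmem := hS₀sub hi
        simp only [Finset.mem_filter, Finset.mem_univ, true_and] at hmem
        exact hmem
  -- existence of a continuous admissible function in the strip
  have key : ∃ vs : ℝ → ℝ, ContinuousOn vs (Set.Icc (-T) T) ∧
      (∫ x in (-T)..T, vs x) = A ∧ ∀ x ∈ Set.Icc (-T) T, strip x (vs x) := by
    rcases Nat.eq_zero_or_pos K with hK0 | hK1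
    · refine ⟨fun _ => A / (2 * T), continuousOn_const, ?_, ?_⟩
      · rw [intervalIntegral.integral_const, smul_eq_mul]
        field_simp
        ring
      · intro x hx
        constructor
        · intro h; exfalso; omega
        · intro h; exfalso; omega
    · by_cases hj0 : j = 0
      · have h0K : j < K := by omega
        obtain ⟨b, hbc, hba⟩ := hb 1 le_rfl hK1
        have hIeq : (∫ x in (-T)..T, a 1 x) = ∫ x in (-T)..T, b x := by
          apply intervalIntegral.integral_congr
          rw [huIcc]
          intro x hx
          exact hba x hx
        have hA1' : (∫ x in (-T)..T, b x) ≤ A := by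
          have h2 := hA1 h0K
          rw [hj0] at h2
          rw [← hIeq]
          simpa using h2
        set c := (A - ∫ x in (-T)..T, b x) / (2 * T) with hc
        have hcnn : 0 ≤ c := div_nonneg (by linarith) (by linarith)
        refine ⟨fun x => b x + c, hbc.add continuousOn_const, ?_, ?_⟩
        · rw [intervalIntegral.integral_add (hInt b hbc) (hInt _ continuousOn_const),
            intervalIntegral.integral_const, smul_eq_mul, hc]
          field_simp
          ring
        · intro x hx
          constructor
          · intro _
            have : a (j + 1) x = a 1 x := by rw [hj0]
            rw [this, hba x hx]
            show b x ≤ b x + c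
            linarith
          · intro h; exfalso; omega
      · by_cases hjeqK : j = K
        · obtain ⟨b, hbc, hba⟩ := hb K hK1 le_rfl
          have hIeq : (∫ x in (-T)..T, a K x) = ∫ x in (-T)..T, b x := by
            apply intervalIntegral.integral_congr
            rw [huIcc]
            intro x hx
            exact hba x hx
          have hA2' : A ≤ ∫ x in (-T)..T, b x := by
            have h2 := hA2 (by omega)
            rw [hjeqK] at h2
            rw [← hIeq]
            exact h2
          set c := ((∫ x in (-T)..T, b x) - A) / (2 * T) with hc
          have hcnn : 0 ≤ c := div_nonneg (by linarith) (by linarith)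
          refine ⟨fun x => b x - c, hbc.sub continuousOn_const, ?_, ?_⟩
          · rw [intervalIntegral.integral_sub (hInt b hbc) (hInt _ continuousOn_const),
              intervalIntegral.integral_const, smul_eq_mul, hc]
            field_simp
            ring
          · intro x hx
            constructor
            · intro h; exfalso; omega
            · intro _
              have : a j x = b x := by rw [hjeqK]; exact hba x hx
              rw [this]
              show b x - c ≤ b x
              linarith
        · have hj1 : 1 ≤ j := by omega
          have hjlt : j < K := by omega
          obtain ⟨bj, hbjc, hbja⟩ := hb j hj1 hjK
          obtain ⟨bj1, hbj1c, hbj1a⟩ := hb (j + 1) (by omega) (by omega)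
          have hIj : (∫ x in (-T)..T, a j x) = ∫ x in (-T)..T, bj x := by
            apply intervalIntegral.integral_congr
            rw [huIcc]
            intro x hx
            exact hbja x hx
          have hIj1 : (∫ x in (-T)..T, a (j + 1) x) = ∫ x in (-T)..T, bj1 x := by
            apply intervalIntegral.integral_congr
            rw [huIcc]
            intro x hx
            exact hbj1a x hx
          have hAle : A ≤ ∫ x in (-T)..T, bj x := by
            rw [← hIj]; exact hA2 hj1
          have hAge : (∫ x in (-T)..T, bj1 x) ≤ A := by
            rw [← hIj1]; exact hA1 hjlt
          have hble : ∀ x ∈ Set.Icc (-T) T, bj1 x ≤ bj x := by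
            intro x hx
            rw [← hbj1a x hx, ← hbja x hx]
            exact hmono j hj1 hjlt x hx
          by_cases hD : (∫ x in (-T)..T, bj x) - (∫ x in (-T)..T, bj1 x) = 0
          · refine ⟨bj, hbjc, by linarith, ?_⟩
            intro x hx
            constructor
            · intro _
              rw [← hbja x hx]
              exact hmono j hj1 hjlt x hx
            · intro _
              rw [← hbja x hx]
          · have hDpos : 0 < (∫ x in (-T)..T, bj x) - ∫ x in (-T)..T, bj1 x :=
              lt_of_le_of_ne (by linarith) (Ne.symm hD)
            set lam := (A - ∫ x in (-T)..T, bj1 x) / ((∫ x in (-T)..T, bj x) - ∫ x in (-T)..T, bj1 x) with hlam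
            have hlam0 : 0 ≤ lam := div_nonneg (by linarith) (by linarith)
            have hlam1 : lam ≤ 1 := (div_le_one hDpos).mpr (by linarith)
            refine ⟨fun x => lam * bj x + (1 - lam) * bj1 x,
              (continuousOn_const.mul hbjc).add (continuousOn_const.mul hbj1c), ?_, ?_⟩
            · rw [intervalIntegral.integral_add (hInt (fun x => lam * bj x) (continuousOn_const.mul hbjc))
                (hInt (fun x => (1 - lam) * bj1 x) (continuousOn_const.mul hbj1c)),
                intervalIntegral.integral_const_mul, intervalIntegral.integral_const_mul]
              have hmul : lam * ((∫ x in (-T)..T, bj x) - ∫ x in (-T)..T, bj1 x)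
                  = A - ∫ x in (-T)..T, bj1 x := by
                rw [hlam]
                field_simp
              have hexp : lam * ((∫ x in (-T)..T, bj x) - ∫ x in (-T)..T, bj1 x)
                  = lam * (∫ x in (-T)..T, bj x) - lam * ∫ x in (-T)..T, bj1 x := by ring
              have hexp2 : (1 - lam) * (∫ x in (-T)..T, bj1 x)
                  = (∫ x in (-T)..T, bj1 x) - lam * ∫ x in (-T)..T, bj1 x := by ring
              linarith
            · intro x hx
              have h1 := hble x hx
              constructor
              · intro _
                rw [hbj1a x hx]
                show bj1 x ≤ lam * bj x + (1 - lam) * bj1 x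
                nlinarith
              · intro _
                rw [hbja x hx]
                show lam * bj x + (1 - lam) * bj1 x ≤ bj x
                nlinarith
  -- continuity of integrands
  have hcontsum : ∀ v : ℝ → ℝ, ContinuousOn v (Set.Icc (-T) T) →
      ContinuousOn (fun x => ∑ i, |t i x - v x|) (Set.Icc (-T) T) := by
    intro v hv
    exact continuousOn_finset_sum _ (fun i _ => ((ht i).sub hv).abs)
  have hconth : ∀ v : ℝ → ℝ, ContinuousOn v (Set.Icc (-T) T) →
      ContinuousOn (fun x => hf x (v x)) (Set.Icc (-T) T) := by
    intro v hv
    exact (hcontsum v hv).add (continuousOn_const.mul hv)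
  -- decomposition of the h-integral
  have hdecomp : ∀ v : ℝ → ℝ, ContinuousOn v (Set.Icc (-T) T) → (∫ x in (-T)..T, v x) = A →
      (∫ x in (-T)..T, hf x (v x)) = (∫ x in (-T)..T, ∑ i, |t i x - v x|) + c0 * A := by
    intro v hv hvA
    have h1 : (∫ x in (-T)..T, hf x (v x))
        = (∫ x in (-T)..T, ∑ i, |t i x - v x|) + ∫ x in (-T)..T, c0 * v x := by
      rw [← intervalIntegral.integral_add (hInt _ (hcontsum v hv))
        (hInt (fun x => c0 * v x) (continuousOn_const.mul hv))]
    rw [h1, intervalIntegral.integral_const_mul, hvA]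
  obtain ⟨vs, hvsc, hvsA, hvss⟩ := key
  constructor
  · refine ⟨vs, hvsc, hvsA, ?_⟩
    intro w hwc hwA
    have hmono' : (∫ x in (-T)..T, hf x (vs x)) ≤ ∫ x in (-T)..T, hf x (w x) := by
      refine intervalIntegral.integral_mono_on hTT (hInt _ (hconth vs hvsc))
        (hInt _ (hconth w hwc)) ?_
      intro x hx
      exact hM1 x hx (vs x) (hvss x hx) (w x)
    have d1 := hdecomp vs hvsc hvsA
    have d2 := hdecomp w hwc hwA
    linarith
  · intro v hvc hvA hvmin x₀ hx₀
    have hVle : (∫ x in (-T)..T, hf x (v x)) ≤ ∫ x in (-T)..T, hf x (vs x) := by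
      have := hvmin vs hvsc hvsA
      have d1 := hdecomp v hvc hvA
      have d2 := hdecomp vs hvsc hvsA
      linarith
    have hphi : ∀ x ∈ Set.Icc (-T) T, 0 ≤ hf x (v x) - hf x (vs x) := by
      intro x hx
      have := hM1 x hx (vs x) (hvss x hx) (v x)
      linarith
    have hphic : ContinuousOn (fun x => hf x (v x) - hf x (vs x)) (Set.Icc (-T) T) :=
      (hconth v hvc).sub (hconth vs hvsc)
    have hzero : ¬ (0 < hf x₀ (v x₀) - hf x₀ (vs x₀)) := by
      intro hpos
      have : 0 < ∫ x in (-T)..T, (hf x (v x) - hf x (vs x)) := by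
        refine intervalIntegral.integral_pos (by linarith) hphic ?_ ⟨x₀, hx₀, hpos⟩
        intro x hx
        exact hphi x (Set.Ioc_subset_Icc_self hx)
      rw [intervalIntegral.integral_sub (hInt _ (hconth v hvc)) (hInt _ (hconth vs hvsc))] at this
      linarith
    push_neg at hzero
    constructor
    · intro hjK'
      have := hM3 x₀ hx₀ (vs x₀) (hvss x₀ hx₀) hjK' (v x₀)
      linarith
    · intro hj
      have := hM2 x₀ hx₀ (vs x₀) (hvss x₀ hx₀) hj (v x₀)
      linarith
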